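/- Let w : U → ℂ be holomorphic with w(0) = 0, and let g : U → ℂ be holomorphic with g(0) = 0. Write a_k for the k-th Taylor coefficient of w at 0 and c_k for the k-th Taylor coefficient of g at 0, and set a = (a_1,…,a_n), c = (c_1,…,c_n) ∈ ℂ^n. Then for every integer s ≥ 0 and every k with 1 ≤ k ≤ n, the k-th Taylor coefficient at 0 of the product w^s · g equals the k-th component of the vector A(a)^s c. -/

import Mathlib

open Complex Metric Finset
open scoped Topology

/-- The `k`-th Taylor coefficient of `f` at `0`. -/
noncomputable def taylorCoeff (f : ℂ → ℂ) (k : ℕ) : ℂ :=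
  iteratedDeriv k f 0 / Nat.factorial k

/-- The lower-triangular nilpotent Toeplitz matrix `A(a)` with `A(a)_{j,k} = a_{j-k}`
(1-indexed) for `j > k` and `0` otherwise. -/
noncomputable def toeplitzA {n : ℕ} (a : Fin n → ℂ) : Matrix (Fin n) (Fin n) ℂ :=
  Matrix.of fun j k =>
    if _ : (k : ℕ) < (j : ℕ) then a ⟨(j : ℕ) - (k : ℕ) - 1, by have := j.isLt; omega⟩ else 0

lemma taylorCoeff_eq_coeff {f : ℂ → ℂ} {p : FormalMultilinearSeries ℂ ℂ ℂ}
    (hf : HasFPowerSeriesAt f p 0) (k : ℕ) : taylorCoeff f k = p.coeff k := by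
  obtain ⟨r, hr⟩ := hf
  have h1 := hr.factorial_smul (1 : ℂ) k
  simp only [FormalMultilinearSeries.apply_eq_pow_smul_coeff, one_pow, one_smul] at h1
  have h2 : iteratedDeriv k f 0 = (k.factorial : ℂ) * p.coeff k := by
    rw [iteratedDeriv, ← h1]
    simp [nsmul_eq_mul]
  rw [taylorCoeff, h2]
  have hk : (k.factorial : ℂ) ≠ 0 := by exact_mod_cast k.factorial_ne_zero
  field_simp

lemma ofScalars_coeff (c : ℕ → ℂ) (m : ℕ) :
    (FormalMultilinearSeries.ofScalars ℂ c).coeff m = c m := by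
  show (FormalMultilinearSeries.ofScalars ℂ c m) (fun _ => (1:ℂ)) = c m
  rw [FormalMultilinearSeries.ofScalars_apply_eq]
  simp

lemma hasFPowerSeriesAt_mul {f h : ℂ → ℂ} {p q : FormalMultilinearSeries ℂ ℂ ℂ}
    (hf : HasFPowerSeriesAt f p 0) (hh : HasFPowerSeriesAt h q 0) :
    HasFPowerSeriesAt (fun z => f z * h z)
      (FormalMultilinearSeries.ofScalars ℂ fun m =>
        ∑ i ∈ Finset.range (m + 1), p.coeff i * q.coeff (m - i)) 0 := by
  rw [hasFPowerSeriesAt_iff]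
  obtain ⟨rp, hrp⟩ := hf
  obtain ⟨rq, hrq⟩ := hh
  have hr : (0 : ENNReal) < min rp rq := lt_min hrp.r_pos hrq.r_pos
  have hfs := hasFPowerSeriesAt_iff.mp ⟨rp, hrp⟩
  have hhs := hasFPowerSeriesAt_iff.mp ⟨rq, hrq⟩
  filter_upwards [EMetric.ball_mem_nhds (0:ℂ) hr, hfs, hhs] with z hz hfz hhz
  have hzp : (‖z‖₊ : ENNReal) < p.radius := by
    have : edist z 0 < rp := lt_of_lt_of_le hz (min_le_left _ _)
    rw [edist_zero_right] at this
    exact lt_of_lt_of_le this hrp.r_le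
  have hzq : (‖z‖₊ : ENNReal) < q.radius := by
    have : edist z 0 < rq := lt_of_lt_of_le hz (min_le_right _ _)
    rw [edist_zero_right] at this
    exact lt_of_lt_of_le this hrq.r_le
  have hsump : Summable fun n => ‖z ^ n • p.coeff n‖ := by
    apply (p.summable_norm_mul_pow hzp).congr
    intro n
    rw [FormalMultilinearSeries.norm_apply_eq_norm_coef]
    simp [norm_smul, mul_comm]
  have hsumq : Summable fun n => ‖z ^ n • q.coeff n‖ := by
    apply (q.summable_norm_mul_pow hzq).congr
    intro n
    rw [FormalMultilinearSeries.norm_apply_eq_norm_coef]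
    simp [norm_smul, mul_comm]
  have key := hasSum_sum_range_mul_of_summable_norm hsump hsumq
  rw [hfz.tsum_eq, hhz.tsum_eq] at key
  simp only [zero_add] at key ⊢
  convert key using 2 with m
  show z ^ m • (FormalMultilinearSeries.ofScalars ℂ _).coeff m = _
  rw [ofScalars_coeff, Finset.smul_sum]
  apply Finset.sum_congr rfl
  intro i hi
  simp only [Finset.mem_range] at hi
  have hm : i + (m - i) = m := by omega
  calc z ^ m • (p.coeff i * q.coeff (m - i))
      = z ^ (i + (m - i)) * (p.coeff i * q.coeff (m - i)) := by rw [hm]; simp [smul_eq_mul]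
    _ = z ^ i • p.coeff i * z ^ (m - i) • q.coeff (m - i) := by
        rw [pow_add]; simp only [smul_eq_mul]; ring
  rfl

lemma taylorCoeff_mul {f h : ℂ → ℂ} (hf : AnalyticAt ℂ f 0) (hh : AnalyticAt ℂ h 0) (m : ℕ) :
    taylorCoeff (fun z => f z * h z) m
      = ∑ i ∈ Finset.range (m + 1), taylorCoeff f i * taylorCoeff h (m - i) := by
  obtain ⟨p, hp⟩ := hf
  obtain ⟨q, hq⟩ := hh
  rw [taylorCoeff_eq_coeff (hasFPowerSeriesAt_mul hp hq) m]
  rw [ofScalars_coeff]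
  exact Finset.sum_congr rfl fun i _ => by
    rw [taylorCoeff_eq_coeff hp, taylorCoeff_eq_coeff hq]

lemma taylorCoeff_zero (f : ℂ → ℂ) : taylorCoeff f 0 = f 0 := by
  simp [taylorCoeff]

lemma toeplitz_mulVec {n : ℕ} (a v : Fin n → ℂ) (k : Fin n) :
    (toeplitzA a).mulVec v k
      = ∑ j ∈ Finset.range k.1,
          (if h : k.1 - j - 1 < n then a ⟨k.1 - j - 1, h⟩ else 0)
        * (if h : j < n then v ⟨j, h⟩ else 0) := by
  set F : ℕ → ℂ := fun j =>
    if j < k.1 then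
      (if h : k.1 - j - 1 < n then a ⟨k.1 - j - 1, h⟩ else 0)
        * (if h : j < n then v ⟨j, h⟩ else 0)
    else 0 with hF
  have step1 : ∀ j : Fin n, toeplitzA a k j * v j = F j.1 := by
    intro j
    simp only [hF, toeplitzA, Matrix.of_apply]
    by_cases hj : (j : ℕ) < k.1
    · rw [dif_pos hj, if_pos hj, dif_pos (by have := k.isLt; omega : k.1 - j.1 - 1 < n),
        dif_pos j.isLt]
    · rw [dif_neg hj, if_neg hj, zero_mul]
  calc (toeplitzA a).mulVec v k = ∑ j : Fin n, toeplitzA a k j * v j := by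
        rw [Matrix.mulVec, dotProduct]
    _ = ∑ j : Fin n, F j.1 := Finset.sum_congr rfl fun j _ => step1 j
    _ = ∑ j ∈ Finset.range n, F j := Fin.sum_univ_eq_sum_range F n
    _ = ∑ j ∈ Finset.range k.1, F j := by
        refine (Finset.sum_subset (Finset.range_subset_range.mpr k.isLt.le) ?_).symm
        intro x _ hx
        simp only [Finset.mem_range, not_lt] at hx
        simp [hF, Nat.not_lt.mpr hx]
    _ = _ := by
        refine Finset.sum_congr rfl fun j hj => ?_
        simp only [Finset.mem_range] at hj
        simp [hF, hj]

/-- if `w, g` are holomorphic on the unit disk and vanish at the origin,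
with first `n` Taylor coefficients `a = (a_1, …, a_n)` and `c = (c_1, …, c_n)`,
then for every `s ≥ 0` and `1 ≤ k ≤ n`, the `k`-th Taylor coefficient of
`w^s · g` equals `(A(a)^s c)_k`. -/
theorem taylorCoeff_pow_mul_eq_toeplitz_pow_mulVec
    (n : ℕ) (w g : ℂ → ℂ)
    (hw : DifferentiableOn ℂ w (ball (0 : ℂ) 1)) (hw0 : w 0 = 0)
    (hg : DifferentiableOn ℂ g (ball (0 : ℂ) 1)) (hg0 : g 0 = 0)
    (a c : Fin n → ℂ)
    (ha : ∀ k : Fin n, a k = taylorCoeff w (k.1 + 1))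
    (hc : ∀ k : Fin n, c k = taylorCoeff g (k.1 + 1)) :
    ∀ s : ℕ, ∀ k : Fin n,
      taylorCoeff (fun z => w z ^ s * g z) (k.1 + 1)
        = ((toeplitzA a ^ s).mulVec c) k := by
  have hwa : AnalyticAt ℂ w 0 := hw.analyticAt (isOpen_ball.mem_nhds (mem_ball_self one_pos))
  have hga : AnalyticAt ℂ g 0 := hg.analyticAt (isOpen_ball.mem_nhds (mem_ball_self one_pos))
  intro s
  induction s with
  | zero =>
    intro k
    simp only [pow_zero, one_mul, Matrix.one_mulVec]
    exact (hc k).symm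
  | succ s ih =>
    intro k
    have hHa : AnalyticAt ℂ (fun z => w z ^ s * g z) 0 := (hwa.pow s).mul hga
    have hH0 : (fun z => w z ^ s * g z) 0 = 0 := by simp [hg0]
    have hfun : (fun z : ℂ => w z ^ (s + 1) * g z)
        = fun z => w z * (w z ^ s * g z) := by funext z; ring
    rw [hfun, taylorCoeff_mul hwa hHa (k.1 + 1)]
    rw [Finset.sum_range_succ', Finset.sum_range_succ]
    rw [taylorCoeff_zero w, hw0, zero_mul, add_zero]
    have hlast : (k.1 + 1) - (k.1 + 1) = 0 := by omega
    rw [hlast, taylorCoeff_zero]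
    simp only [hg0, mul_zero, add_zero]
    rw [pow_succ', ← Matrix.mulVec_mulVec, toeplitz_mulVec]
    conv_rhs => rw [← Finset.sum_range_reflect]
    refine Finset.sum_congr rfl fun i hi => ?_
    simp only [Finset.mem_range] at hi
    have hkn := k.isLt
    have e1 : k.1 - (k.1 - 1 - i) - 1 = i := by omega
    have e2 : k.1 - 1 - i < n := by omega
    have e3 : i < n := by omega
    simp only [e1]
    rw [dif_pos e3, dif_pos e2]
    have e4 : (k.1 - 1 - i) + 1 = k.1 - i := by omega
    have e5 : (k.1 + 1) - (i + 1) = k.1 - i := by omega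
    rw [e5, ← ha ⟨i, e3⟩]
    have := ih ⟨k.1 - 1 - i, e2⟩
    simp only [e4] at this
    rw [← this]
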